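/- With a perfect DI oracle (DI(i,j;S) = 1 if the directed information I(X_i → X_j ‖ X_S) = 0 and DI(i,j;S) = 0 if it is positive), the MMPC-p algorithm is sound and complete: after Phase I the candidate set CP(j) contains Pa(j), and after Phase II, CP(j) = Pa(j), assuming the local Markov property (I(X_i → X_j ‖ X_{Pa(j)}) = 0 whenever i ∉ Pa(j) ∪ {j}) and the monotone faithfulness assumption (if I(X_i → X_j ‖ X_{[m]∖{i,j}}) > 0 then I(X_i → X_j ‖ X_A) > 0 for all A ⊆ [m]∖{i,j}). -/
import Mathlib


/-- Soundness and completeness of MMPC-p with a perfect DI oracle.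
`I i j S` is the directed information `I(X_i → X_j ‖ X_S)` (nonnegative); the true parent set
is `Pa = {i : I(X_i → X_j ‖ X_{[m]∖{i,j}}) > 0}`; the perfect oracle returns p-value 1 when the
directed information vanishes and 0 otherwise.  Under the local Markov property and the
monotone faithfulness assumption, after Phase I the candidate set `CP1` contains `Pa`, and the
Phase II output `CP2` equals `Pa`. -/
theorem mmpcp_sound_complete
    (m : ℕ) (α : ℝ) (hα : α ∈ Set.Ioo (0 : ℝ) 1)
    (I : Fin m → Fin m → Finset (Fin m) → ℝ)
    (hInonneg : ∀ i j S, 0 ≤ I i j S)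
    (j : Fin m)
    (Pa : Finset (Fin m))
    (hPa : ∀ i, i ∈ Pa ↔ i ≠ j ∧ 0 < I i j (Finset.univ \ {i, j}))
    (DI : Fin m → Fin m → Finset (Fin m) → ℝ)
    (hOracle : ∀ i k S, DI i k S = if I i k S = 0 then 1 else 0)
    (hMarkov : ∀ i, i ≠ j → i ∉ Pa → I i j Pa = 0)
    (hFaith : ∀ i ∈ Pa, ∀ A : Finset (Fin m), A ⊆ Finset.univ \ {i, j} → 0 < I i j A)
    (CP1 : Finset (Fin m)) (hjCP1 : j ∉ CP1)
    (hPhase1 : ∀ i, i ≠ j → i ∉ CP1 →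
      ∃ F : Finset (Fin m), F ⊆ CP1 ∧ α - min α (DI i j F) = 0)
    (CP2 : Finset (Fin m))
    (hPhase2 : ∀ i, i ∈ CP2 ↔ i ∈ CP1 ∧
      ∀ F : Finset (Fin m), F ⊆ CP1 \ {i} → 0 < α - min α (DI i j F)) :
    Pa ⊆ CP1 ∧ CP2 = Pa := by
  obtain ⟨hα0, hα1⟩ := hα
  have hsub : Pa ⊆ CP1 := by
    intro i hi
    obtain ⟨hij, _⟩ := (hPa i).1 hi
    by_contra hnot
    obtain ⟨F, hF, hF0⟩ := hPhase1 i hij hnot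
    have hFsub : F ⊆ Finset.univ \ {i, j} := by
      intro x hx
      simp only [Finset.mem_sdiff, Finset.mem_univ, Finset.mem_insert,
        Finset.mem_singleton, true_and]
      push_neg
      exact ⟨fun h => hnot (h ▸ hF hx), fun h => hjCP1 (h ▸ hF hx)⟩
    have hpos := hFaith i hi F hFsub
    rw [hOracle, if_neg (ne_of_gt hpos)] at hF0
    simp only [min_eq_right hα0.le] at hF0
    linarith
  refine ⟨hsub, ?_⟩
  ext i
  rw [hPhase2]
  constructor
  · rintro ⟨hi1, hAll⟩
    by_contra hiPa
    have hij : i ≠ j := fun h => hjCP1 (h ▸ hi1)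
    have hI0 := hMarkov i hij hiPa
    have hPaSub : Pa ⊆ CP1 \ {i} := by
      intro x hx
      simp only [Finset.mem_sdiff, Finset.mem_singleton]
      exact ⟨hsub hx, fun h => hiPa (h ▸ hx)⟩
    have := hAll Pa hPaSub
    rw [hOracle, if_pos hI0, min_eq_left hα1.le] at this
    linarith
  · intro hi
    refine ⟨hsub hi, fun F hF => ?_⟩
    obtain ⟨hij, _⟩ := (hPa i).1 hi
    have hFsub : F ⊆ Finset.univ \ {i, j} := by
      intro x hx
      have hx' := hF hx
      simp only [Finset.mem_sdiff, Finset.mem_singleton] at hx'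
      simp only [Finset.mem_sdiff, Finset.mem_univ, Finset.mem_insert,
        Finset.mem_singleton, true_and]
      push_neg
      exact ⟨hx'.2, fun h => hjCP1 (h ▸ hx'.1)⟩
    have hpos := hFaith i hi F hFsub
    rw [hOracle, if_neg (ne_of_gt hpos)]
    simp only [min_eq_right hα0.le]
    linarith
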